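/- Bound on the arcosh ratio. For all w ∈ (0,1) and δ ∈ (0,1), arcosh(1/δ) / arcosh(1/√(1−w²)) ≤ ln(2/δ) / w. -/

import Mathlib

/-- The inverse hyperbolic cosine, `arcosh(x) = ln(x + √(x²−1))` for `x ≥ 1`. -/
noncomputable def arcosh (x : ℝ) : ℝ := Real.log (x + Real.sqrt (x ^ 2 - 1))

/-- `2w ≤ ln(1+w) − ln(1−w)` for `w ∈ [0,1)`. -/
lemma two_mul_le_log_div (w : ℝ) (h0 : 0 ≤ w) (h1 : w < 1) :
    2 * w ≤ Real.log (1 + w) - Real.log (1 - w) := by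
  set f : ℝ → ℝ := fun x => Real.log (1 + x) - Real.log (1 - x) - 2 * x with hf
  have key : MonotoneOn f (Set.Icc 0 w) := by
    apply monotoneOn_of_deriv_nonneg (convex_Icc 0 w)
    · apply ContinuousOn.sub (ContinuousOn.sub ?_ ?_) (by fun_prop)
      · apply Real.continuousOn_log.comp (by fun_prop)
        intro x hx
        simp only [Set.mem_Icc] at hx
        simp only [Set.mem_compl_iff, Set.mem_singleton_iff]
        nlinarith [hx.1]
      · apply Real.continuousOn_log.comp (by fun_prop)
        intro x hx
        simp only [Set.mem_Icc] at hx
        simp only [Set.mem_compl_iff, Set.mem_singleton_iff]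
        nlinarith [hx.2]
    · intro x hx
      rw [interior_Icc] at hx
      obtain ⟨hx0, hxw⟩ := hx
      have hx1 : x < 1 := lt_of_lt_of_le hxw h1.le
      have h1p : (0:ℝ) < 1 + x := by linarith
      have h1m : (0:ℝ) < 1 - x := by linarith
      apply DifferentiableAt.differentiableWithinAt
      apply DifferentiableAt.sub (DifferentiableAt.sub ?_ ?_) (by fun_prop)
      · exact (Real.differentiableAt_log h1p.ne').comp x (by fun_prop)
      · exact (Real.differentiableAt_log h1m.ne').comp x (by fun_prop)
    · intro x hx
      rw [interior_Icc] at hx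
      obtain ⟨hx0, hxw⟩ := hx
      have hx1 : x < 1 := lt_of_lt_of_le hxw h1.le
      have h1p : (0:ℝ) < 1 + x := by linarith
      have h1m : (0:ℝ) < 1 - x := by linarith
      have d1 : HasDerivAt (fun x : ℝ => Real.log (1 + x)) (1 / (1 + x)) x := by
        have : HasDerivAt (fun x : ℝ => 1 + x) 1 x := by
          simpa using (hasDerivAt_id x).const_add 1
        simpa [Function.comp_def] using (Real.hasDerivAt_log h1p.ne').comp x this
      have d2 : HasDerivAt (fun x : ℝ => Real.log (1 - x)) (-(1 / (1 - x))) x := by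
        have : HasDerivAt (fun x : ℝ => 1 - x) (-1) x := by
          simpa using (hasDerivAt_id x).const_sub 1
        have := (Real.hasDerivAt_log h1m.ne').comp x this
        simpa [div_eq_mul_inv, mul_comm, Function.comp_def] using this
      have d3 : HasDerivAt f (1 / (1 + x) - (-(1 / (1 - x))) - 2) x := by
        have : HasDerivAt (fun x : ℝ => 2 * x) 2 x := by
          simpa using (hasDerivAt_id x).const_mul 2
        exact (d1.sub d2).sub this
      rw [d3.deriv]
      rw [sub_nonneg]
      rw [sub_neg_eq_add, div_add_div _ _ h1p.ne' h1m.ne', le_div_iff₀ (by positivity)]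
      nlinarith
  have := key (Set.left_mem_Icc.2 h0) (Set.right_mem_Icc.2 h0) h0
  simp only [hf] at this
  simp only [add_zero, sub_zero, mul_zero, Real.log_one, sub_self] at this
  linarith

/-- Bound on the arcosh ratio: for all `w, δ ∈ (0,1)`,
`arcosh(1/δ) / arcosh(1/√(1−w²)) ≤ ln(2/δ) / w`. -/
theorem arcosh_ratio_le
    (w δ : ℝ) (hw : w ∈ Set.Ioo (0 : ℝ) 1) (hδ : δ ∈ Set.Ioo (0 : ℝ) 1) :
    arcosh (1 / δ) / arcosh (1 / Real.sqrt (1 - w ^ 2)) ≤ Real.log (2 / δ) / w := by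
  obtain ⟨hw0, hw1⟩ := hw
  obtain ⟨hδ0, hδ1⟩ := hδ
  have hw2 : (0:ℝ) < 1 - w ^ 2 := by nlinarith
  set s := Real.sqrt (1 - w ^ 2) with hs
  have hs0 : 0 < s := Real.sqrt_pos.2 hw2
  have hssq : s ^ 2 = 1 - w ^ 2 := Real.sq_sqrt hw2.le
  -- denominator equals (1/2) ln((1+w)/(1-w)) and is ≥ w
  have hden : arcosh (1 / s) = Real.log ((1 + w) / s) := by
    unfold arcosh
    congr 1
    have : (1 / s) ^ 2 - 1 = (w / s) ^ 2 := by
      field_simp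
      nlinarith
    rw [this, Real.sqrt_sq (by positivity)]
    field_simp
  have hlogs : Real.log s = (Real.log (1 + w) + Real.log (1 - w)) / 2 := by
    have : Real.log s = Real.log (1 - w ^ 2) / 2 := by
      rw [hs, Real.log_sqrt hw2.le]
    rw [this]
    congr 1
    rw [show (1:ℝ) - w ^ 2 = (1 + w) * (1 - w) by ring,
      Real.log_mul (by positivity) (by linarith : (0:ℝ) < 1 - w).ne']
  have hdenval : arcosh (1 / s) = (Real.log (1 + w) - Real.log (1 - w)) / 2 := by
    rw [hden, Real.log_div (by positivity) hs0.ne', hlogs]; ring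
  have hden_ge : w ≤ arcosh (1 / s) := by
    rw [hdenval]
    have := two_mul_le_log_div w hw0.le hw1
    linarith
  -- numerator: 0 ≤ arcosh(1/δ) ≤ ln(2/δ)
  have hnum_nonneg : 0 ≤ arcosh (1 / δ) := by
    unfold arcosh
    apply Real.log_nonneg
    have h1δ : (1:ℝ) ≤ 1 / δ := one_le_one_div hδ0 hδ1.le
    have : (0:ℝ) ≤ Real.sqrt ((1 / δ) ^ 2 - 1) := Real.sqrt_nonneg _
    linarith
  have hnum_le : arcosh (1 / δ) ≤ Real.log (2 / δ) := by
    unfold arcosh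
    apply Real.log_le_log (by positivity)
    have hsq : Real.sqrt ((1 / δ) ^ 2 - 1) ≤ 1 / δ := by
      rw [show (1/δ)^2 - 1 = (1/δ)^2 - 1 from rfl]
      calc Real.sqrt ((1 / δ) ^ 2 - 1) ≤ Real.sqrt ((1 / δ) ^ 2) :=
            Real.sqrt_le_sqrt (by linarith)
        _ = 1 / δ := Real.sqrt_sq (by positivity)
    have : (2:ℝ) / δ = 1 / δ + 1 / δ := by ring
    linarith
  -- combine
  calc arcosh (1 / δ) / arcosh (1 / s)
      ≤ arcosh (1 / δ) / w := by
        apply div_le_div_of_nonneg_left hnum_nonneg hw0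
        · exact hden_ge
    _ ≤ Real.log (2 / δ) / w := by gcongr
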